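/- Let 0 < ν < 2, ω = ½√(4-ν²), and q₀, s₀ ∈ ℝ. Define A₁₁ = (νs₀+2q₀)/√(4-ν²), A₁₂ = (νq₀+2s₀)/√(4-ν²), F(t) = 1 - s₀ + (A₁₁ sin ωt + s₀ cos ωt)e^{-νt/2}, G(t) = (-A₁₂ sin ωt + q₀ cos ωt)e^{-νt/2}. Then on any interval where F(t) ≠ 0, the functions q(t) = G(t)/F(t) and s(t) = -q'(t) - q(t)² - νq(t) satisfy the system q' = -s - q² - νq, s' = q - qs with q(0) = q₀, s(0) = s₀. -/

import Mathlib

lemma osc_deriv (ω ν a b t : ℝ) :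
    HasDerivAt (fun t => (a * Real.sin (ω * t) + b * Real.cos (ω * t)) * Real.exp (-(ν * t) / 2))
      (((a * ω - b * (ν / 2)) * Real.cos (ω * t) + (-(b * ω) - a * (ν / 2)) * Real.sin (ω * t)) *
        Real.exp (-(ν * t) / 2)) t := by
  have hlin : HasDerivAt (fun t : ℝ => ω * t) ω t := by
    simpa using (hasDerivAt_id t).const_mul ω
  have hsin := (Real.hasDerivAt_sin (ω * t)).comp t hlin
  have hcos := (Real.hasDerivAt_cos (ω * t)).comp t hlin
  have h1 : HasDerivAt (fun t : ℝ => -(ν * t) / 2) (-ν / 2) t := by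
    simpa [neg_div] using ((hasDerivAt_id t).const_mul ν).neg.div_const 2
  have hexp := (Real.hasDerivAt_exp (-(ν * t) / 2)).comp t h1
  have h := ((hsin.const_mul a).add (hcos.const_mul b)).mul hexp
  refine h.congr_deriv ?_
  simp only [Function.comp, Pi.add_apply]
  ring

theorem qs_solution_underdamped (ν : ℝ) (hν0 : 0 < ν) (hν2 : ν < 2)
    (q₀ s₀ : ℝ)
    (ω : ℝ) (hω : ω = (1/2) * Real.sqrt (4 - ν ^ 2))
    (A₁₁ A₁₂ : ℝ)
    (hA11 : A₁₁ = (ν * s₀ + 2 * q₀) / Real.sqrt (4 - ν ^ 2))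
    (hA12 : A₁₂ = (ν * q₀ + 2 * s₀) / Real.sqrt (4 - ν ^ 2))
    (F G : ℝ → ℝ)
    (hF : F = fun t => 1 - s₀ + (A₁₁ * Real.sin (ω * t) + s₀ * Real.cos (ω * t)) * Real.exp (-(ν * t) / 2))
    (hG : G = fun t => (-A₁₂ * Real.sin (ω * t) + q₀ * Real.cos (ω * t)) * Real.exp (-(ν * t) / 2))
    (q s : ℝ → ℝ)
    (hq : q = fun t => G t / F t)
    (hs : s = fun t => -deriv q t - q t ^ 2 - ν * q t) :
    (∀ t : ℝ, F t ≠ 0 →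
      HasDerivAt q (-s t - q t ^ 2 - ν * q t) t ∧ HasDerivAt s (q t - q t * s t) t) ∧
      q 0 = q₀ ∧ s 0 = s₀ := by
  have h4 : (0:ℝ) < 4 - ν ^ 2 := by nlinarith
  set r := Real.sqrt (4 - ν ^ 2) with hr
  have hr2 : r ^ 2 = 4 - ν ^ 2 := Real.sq_sqrt h4.le
  have hr0 : r ≠ 0 := (Real.sqrt_pos.mpr h4).ne'
  -- F' = G
  have hF' : ∀ t, HasDerivAt F (G t) t := by
    intro t
    rw [hF, hG]
    have h := (osc_deriv ω ν A₁₁ s₀ t).const_add (1 - s₀)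
    have e1 : A₁₁ * ω - s₀ * (ν / 2) = q₀ := by
      rw [hA11, hω]; field_simp; ring
    have e2 : -(s₀ * ω) - A₁₁ * (ν / 2) = -A₁₂ := by
      rw [hA11, hA12, hω]; field_simp; linear_combination (-s₀) * hr2
    refine h.congr_deriv ?_
    rw [e1, e2]
    ring
  -- G' = -νG - F + c
  have hG' : ∀ t, HasDerivAt G (-ν * G t - F t + (1 - s₀)) t := by
    intro t
    rw [hF, hG]
    have h := osc_deriv ω ν (-A₁₂) q₀ t
    have e1 : -A₁₂ * ω - q₀ * (ν / 2) = -(ν * q₀) - s₀ := by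
      rw [hA12, hω]; field_simp; ring
    have e2 : -(q₀ * ω) - -A₁₂ * (ν / 2) = ν * A₁₂ - A₁₁ := by
      rw [hA11, hA12, hω]; field_simp; linear_combination (-q₀) * hr2
    refine h.congr_deriv ?_
    rw [e1, e2]
    ring
  -- derivative of q
  have hqd : ∀ t, F t ≠ 0 →
      HasDerivAt q (((-ν * G t - F t + (1 - s₀)) * F t - G t * G t) / F t ^ 2) t := by
    intro t ht
    rw [hq]
    exact (hG' t).div (hF' t) ht
  -- value of s
  have hsval : ∀ t, F t ≠ 0 → s t = 1 - (1 - s₀) / F t := by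
    intro t ht
    rw [hs]
    simp only
    rw [(hqd t ht).deriv, hq]
    field_simp
    ring
  -- continuity of F
  have hFcont : Continuous F := by
    rw [hF]; fun_prop
  have hF0 : F 0 = 1 := by
    rw [hF]; simp
  have hG0 : G 0 = q₀ := by
    rw [hG]; simp
  refine ⟨fun t ht => ⟨?_, ?_⟩, ?_, ?_⟩
  · have hd : -s t - q t ^ 2 - ν * q t = deriv q t := by rw [hs]; ring
    rw [hd, (hqd t ht).deriv]
    exact hqd t ht
  · have hev : s =ᶠ[nhds t] fun u => 1 - (1 - s₀) / F u := by
      filter_upwards [(hFcont.continuousAt (x := t)).eventually_ne ht] with u hu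
      exact hsval u hu
    have hg : HasDerivAt (fun u => 1 - (1 - s₀) / F u) (-((0 * F t - (1 - s₀) * G t) / F t ^ 2)) t :=
      (((hasDerivAt_const t (1 - s₀)).div (hF' t) ht)).const_sub 1
    have := hg.congr_of_eventuallyEq hev
    refine this.congr_deriv ?_
    rw [hq, hsval t ht]
    field_simp
    ring
  · rw [hq]; simp only; rw [hG0, hF0]; simp
  · rw [hsval 0 (by rw [hF0]; norm_num), hF0]; ring
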